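/- Let N₀ = ((B·A₀)ᵀ)⁻¹·Bᵀ, N₁ = ((B·A₁·P_{(2 3)}·A₀·P_{(1 3 2)})ᵀ)⁻¹·Bᵀ, and N₂ = ((B·A₁·P_{(2 3)}·A₁·P_{(2 3)})ᵀ)⁻¹·Bᵀ. Then N₀ = ![![0,0,1],![1,0,−1],![0,1,0]], N₁ = ![![0,1,0],![1,−1,0],![0,0,1]], N₂ = ![![1,0,0],![−1,1,0],![0,0,1]], and for every (x,y) ∈ ℝ² with 0 ≤ y ≤ x ≤ 1: if x+y ≥ 1 then π((1,x,y)·N₀) = (y/x, (1−x)/x); if x+y ≤ 1 and x ≥ 1/2 then π((1,x,y)·N₁) = ((1−x)/x, y/x); if x+y ≤ 1 and x ≤ 1/2 then π((1,x,y)·N₂) = (x/(1−x), y/(1−x)). Hence the Brun map is the Combo TRIP map that applies T_{(e,e,e)} and then applies T_{((2 3),(1 3 2),(2 3))} when (x,y) is not in the subtriangle Δ₀. -/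

import Mathlib

open Matrix

noncomputable section

def A0 : Matrix (Fin 3) (Fin 3) ℝ := !![0,0,1; 1,0,0; 0,1,1]
def A1 : Matrix (Fin 3) (Fin 3) ℝ := !![1,0,1; 0,1,0; 0,0,1]
def Bm : Matrix (Fin 3) (Fin 3) ℝ := !![1,1,1; 0,1,1; 0,0,1]
/-- the permutation matrix of (1 3 2) -/
def P132 : Matrix (Fin 3) (Fin 3) ℝ := !![0,0,1; 1,0,0; 0,1,0]
/-- the permutation matrix of (2 3) -/
def P23 : Matrix (Fin 3) (Fin 3) ℝ := !![1,0,0; 0,0,1; 0,1,0]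

/-- the projection `π(x₀,x₁,x₂) = (x₁/x₀, x₂/x₀)` -/
def proj (v : Fin 3 → ℝ) : ℝ × ℝ := (v 1 / v 0, v 2 / v 0)

lemma hinv0 : ((Bm * A0)ᵀ)⁻¹ = !![0,-1,1; 1,1,-1; -1,1,0] := by
  apply inv_eq_right_inv
  ext i j
  fin_cases i <;> fin_cases j <;>
    simp [Bm, A0, Matrix.transpose, Matrix.vecHead, Matrix.vecTail, Matrix.mul_apply, Fin.sum_univ_three, Matrix.one_apply] <;> norm_num

lemma hinv1 : ((Bm * A1 * P23 * A0 * P132)ᵀ)⁻¹ = !![-1,1,0; 2,-1,0; 0,-1,1] := by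
  apply inv_eq_right_inv
  ext i j
  fin_cases i <;> fin_cases j <;>
    simp [Bm, A1, A0, P23, P132, Matrix.transpose, Matrix.vecHead, Matrix.vecTail, Matrix.mul_apply, Fin.sum_univ_three, Matrix.one_apply] <;> norm_num

lemma hinv2 : ((Bm * A1 * P23 * A1 * P23)ᵀ)⁻¹ = !![1,0,0; -2,1,0; 0,-1,1] := by
  apply inv_eq_right_inv
  ext i j
  fin_cases i <;> fin_cases j <;>
    simp [Bm, A1, P23, Matrix.transpose, Matrix.vecHead, Matrix.vecTail, Matrix.mul_apply, Fin.sum_univ_three, Matrix.one_apply] <;> norm_num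

/-- The Brun map is the Combo TRIP map which applies `T_{(e,e,e)}` and then
`T_{((2 3),(1 3 2),(2 3))}` off `Δ₀`: the matrices `N₀ = ((B·A₀)ᵀ)⁻¹·Bᵀ`,
`N₁ = ((B·A₁·P_{(2 3)}·A₀·P_{(1 3 2)})ᵀ)⁻¹·Bᵀ`, `N₂ = ((B·A₁·P_{(2 3)}·A₁·P_{(2 3)})ᵀ)⁻¹·Bᵀ`
are as stated, and on the corresponding pieces of the triangle `{0 ≤ y ≤ x ≤ 1}` they
induce the three branches of the Brun map. -/
theorem brun_is_combo_trip :
    ((Bm * A0)ᵀ)⁻¹ * Bmᵀ = !![0,0,1; 1,0,-1; 0,1,0] ∧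
    ((Bm * A1 * P23 * A0 * P132)ᵀ)⁻¹ * Bmᵀ = !![0,1,0; 1,-1,0; 0,0,1] ∧
    ((Bm * A1 * P23 * A1 * P23)ᵀ)⁻¹ * Bmᵀ = !![1,0,0; -1,1,0; 0,0,1] ∧
    ∀ x y : ℝ, 0 ≤ y → y ≤ x → x ≤ 1 →
      (1 ≤ x + y →
        proj (Matrix.vecMul ![1, x, y] (((Bm * A0)ᵀ)⁻¹ * Bmᵀ)) =
          (y / x, (1 - x) / x)) ∧
      (x + y ≤ 1 → 1/2 ≤ x →
        proj (Matrix.vecMul ![1, x, y] (((Bm * A1 * P23 * A0 * P132)ᵀ)⁻¹ * Bmᵀ)) =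
          ((1 - x) / x, y / x)) ∧
      (x + y ≤ 1 → x ≤ 1/2 →
        proj (Matrix.vecMul ![1, x, y] (((Bm * A1 * P23 * A1 * P23)ᵀ)⁻¹ * Bmᵀ)) =
          (x / (1 - x), y / (1 - x))) := by
  have h0 : ((Bm * A0)ᵀ)⁻¹ * Bmᵀ = !![0,0,1; 1,0,-1; 0,1,0] := by
    rw [hinv0]
    ext i j
    fin_cases i <;> fin_cases j <;>
      simp [Bm, Matrix.transpose, Matrix.vecHead, Matrix.vecTail, Matrix.mul_apply, Fin.sum_univ_three] <;> norm_num
  have h1 : ((Bm * A1 * P23 * A0 * P132)ᵀ)⁻¹ * Bmᵀ = !![0,1,0; 1,-1,0; 0,0,1] := by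
    rw [hinv1]
    ext i j
    fin_cases i <;> fin_cases j <;>
      simp [Bm, Matrix.transpose, Matrix.vecHead, Matrix.vecTail, Matrix.mul_apply, Fin.sum_univ_three] <;> norm_num
  have h2 : ((Bm * A1 * P23 * A1 * P23)ᵀ)⁻¹ * Bmᵀ = !![1,0,0; -1,1,0; 0,0,1] := by
    rw [hinv2]
    ext i j
    fin_cases i <;> fin_cases j <;>
      simp [Bm, Matrix.transpose, Matrix.vecHead, Matrix.vecTail, Matrix.mul_apply, Fin.sum_univ_three] <;> norm_num
  refine ⟨h0, h1, h2, fun x y hy hyx hx1 => ⟨?_, ?_, ?_⟩⟩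
  · intro h
    rw [h0]
    simp only [proj, Matrix.vecMul, dotProduct, Fin.sum_univ_three, Matrix.cons_val_zero, Matrix.cons_val_one, Matrix.cons_val_two, Matrix.head_cons, Matrix.tail_cons, Matrix.of_apply]
    norm_num
    constructor <;> ring_nf
  · intro h hx2
    rw [h1]
    simp only [proj, Matrix.vecMul, dotProduct, Fin.sum_univ_three, Matrix.cons_val_zero, Matrix.cons_val_one, Matrix.cons_val_two, Matrix.head_cons, Matrix.tail_cons, Matrix.of_apply]
    norm_num
    constructor <;> ring_nf
  · intro h hx2
    rw [h2]
    simp only [proj, Matrix.vecMul, dotProduct, Fin.sum_univ_three, Matrix.cons_val_zero, Matrix.cons_val_one, Matrix.cons_val_two, Matrix.head_cons, Matrix.tail_cons, Matrix.of_apply]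
    norm_num
    constructor <;> ring_nf
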